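/- With notation as in the time-dependent orthogonal polynomial setup, the derivative of the sub-leading coefficient satisfies (d/dt) p_1(n,t) = β_n(t) for n ≥ 1, and consequently α_n'(t) = β_n(t) - β_{n+1}(t) (the second Toda equation). -/

import Mathlib

open MeasureTheory intervalIntegral Polynomial



noncomputable def st4J (w₀ : ℝ → ℝ) (q : Polynomial ℝ) (s : ℝ) : ℝ :=
  ∫ x in (-1:ℝ)..1, q.eval x * w₀ x * Real.exp (-s * x)

lemma st4_uIcc : Set.uIcc (-1:ℝ) 1 = Set.Icc (-1) 1 := Set.uIcc_of_le (by norm_num)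

lemma st4_int' {f : ℝ → ℝ} (hf : ContinuousOn f (Set.Icc (-1) 1)) :
    IntervalIntegrable f volume (-1) 1 := by
  apply ContinuousOn.intervalIntegrable; rwa [st4_uIcc]

lemma st4_intJ {w₀ : ℝ → ℝ} (hw₀ : ContinuousOn w₀ (Set.Icc (-1) 1)) (q : Polynomial ℝ) (s : ℝ) :
    IntervalIntegrable (fun x => q.eval x * w₀ x * Real.exp (-s * x)) volume (-1) 1 := by
  apply st4_int'
  exact ((q.continuous_aeval.continuousOn.mul hw₀).mul (by fun_prop))

lemma st4J_add {w₀ : ℝ → ℝ} (hw₀ : ContinuousOn w₀ (Set.Icc (-1) 1)) (p q : Polynomial ℝ) (s : ℝ) :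
    st4J w₀ (p + q) s = st4J w₀ p s + st4J w₀ q s := by
  unfold st4J
  rw [← integral_add (st4_intJ hw₀ p s) (st4_intJ hw₀ q s)]
  apply integral_congr
  intro x _
  simp [eval_add]; ring

lemma st4J_Cmul {w₀ : ℝ → ℝ} (c : ℝ) (q : Polynomial ℝ) (s : ℝ) :
    st4J w₀ (C c * q) s = c * st4J w₀ q s := by
  unfold st4J
  rw [← intervalIntegral.integral_const_mul]
  apply integral_congr
  intro x _
  simp [eval_mul]; ring

lemma st4J_zero (w₀ : ℝ → ℝ) (s : ℝ) : st4J w₀ 0 s = 0 := by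
  simp [st4J]

-- derivative of s ↦ st4J w₀ q s
lemma st4J_hasDeriv {w₀ : ℝ → ℝ} (hw₀ : ContinuousOn w₀ (Set.Icc (-1) 1))
    (q : Polynomial ℝ) (t : ℝ) :
    HasDerivAt (fun s => st4J w₀ q s) (-(st4J w₀ (X * q) t)) t := by
  have hmeas : ∀ s : ℝ, AEStronglyMeasurable
      (fun x => q.eval x * w₀ x * Real.exp (-s * x)) (volume.restrict (Set.uIoc (-1:ℝ) 1)) := by
    intro s
    apply ContinuousOn.aestronglyMeasurable _ measurableSet_uIoc
    have hsub : Set.uIoc (-1:ℝ) 1 ⊆ Set.Icc (-1) 1 := by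
      rw [Set.uIoc_of_le (by norm_num : (-1:ℝ) ≤ 1)]
      exact Set.Ioc_subset_Icc_self
    exact (((q.continuous_aeval.continuousOn.mul hw₀).mul (by fun_prop)).mono hsub)
  have hmeas' : AEStronglyMeasurable
      (fun x => q.eval x * w₀ x * (-x * Real.exp (-t * x))) (volume.restrict (Set.uIoc (-1:ℝ) 1)) := by
    apply ContinuousOn.aestronglyMeasurable _ measurableSet_uIoc
    have hsub : Set.uIoc (-1:ℝ) 1 ⊆ Set.Icc (-1) 1 := by
      rw [Set.uIoc_of_le (by norm_num : (-1:ℝ) ≤ 1)]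
      exact Set.Ioc_subset_Icc_self
    exact (((q.continuous_aeval.continuousOn.mul hw₀).mul (by fun_prop)).mono hsub)
  have key := intervalIntegral.hasDerivAt_integral_of_dominated_loc_of_deriv_le
    (F := fun s x => q.eval x * w₀ x * Real.exp (-s * x))
    (F' := fun s x => q.eval x * w₀ x * (-x * Real.exp (-s * x)))
    (bound := fun x => |q.eval x * w₀ x| * Real.exp (|t| + 1))
    (a := -1) (b := 1) (x₀ := t) (μ := volume) (Metric.ball_mem_nhds t one_pos)
    (Filter.Eventually.of_forall hmeas)
    (st4_intJ hw₀ q t)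
    hmeas'
    ?_ ?_ ?_
  · obtain ⟨-, hd⟩ := key
    have : (∫ x in (-1:ℝ)..1, q.eval x * w₀ x * (-x * Real.exp (-t * x)))
        = -(st4J w₀ (X * q) t) := by
      unfold st4J
      rw [← intervalIntegral.integral_neg]
      apply integral_congr
      intro x _
      simp [eval_mul]; ring
    rwa [this] at hd
  · -- bound on F'
    apply Filter.Eventually.of_forall
    intro x hx s hs
    have hx' : |x| ≤ 1 := by
      rw [Set.uIoc_of_le (by norm_num : (-1:ℝ) ≤ 1)] at hx
      rw [abs_le]; constructor <;> [linarith [hx.1]; linarith [hx.2]]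
    have hs' : |s| ≤ |t| + 1 := by
      have := abs_sub_abs_le_abs_sub s t
      have h2 : dist s t < 1 := Metric.mem_ball.mp hs
      rw [Real.dist_eq] at h2
      linarith
    have hexp : Real.exp (-s * x) ≤ Real.exp (|t| + 1) := by
      apply Real.exp_le_exp.mpr
      calc -s * x ≤ |(-s) * x| := le_abs_self _
        _ = |s| * |x| := by rw [abs_mul, abs_neg]
        _ ≤ (|t| + 1) * 1 := by
            apply mul_le_mul hs' hx' (abs_nonneg x) (by positivity)
        _ = |t| + 1 := by ring
    calc ‖q.eval x * w₀ x * (-x * Real.exp (-s * x))‖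
        = |q.eval x * w₀ x| * (|x| * Real.exp (-s * x)) := by
          rw [Real.norm_eq_abs, abs_mul, abs_mul, abs_mul, abs_neg, abs_of_nonneg (Real.exp_pos _).le]
      _ ≤ |q.eval x * w₀ x| * (1 * Real.exp (|t| + 1)) := by
          apply mul_le_mul_of_nonneg_left _ (abs_nonneg _)
          exact mul_le_mul hx' hexp (Real.exp_pos _).le zero_le_one
      _ = |q.eval x * w₀ x| * Real.exp (|t| + 1) := by ring
  · apply st4_int'
    apply ContinuousOn.mul _ continuousOn_const
    exact ((q.continuous_aeval.continuousOn.mul hw₀)).abs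
  · apply Filter.Eventually.of_forall
    intro x _ s _
    have : HasDerivAt (fun s : ℝ => Real.exp (-s * x)) (-x * Real.exp (-s * x)) s := by
      have h1 : HasDerivAt (fun s : ℝ => -s * x) (-x) s := by
        simpa using ((hasDerivAt_id s).neg.mul_const x)
      convert h1.exp using 1; ring
    exact (this.const_mul _)

lemma st4_CS {w₀ f g : ℝ → ℝ} (hw₀ : ContinuousOn w₀ (Set.Icc (-1) 1))
    (hw₀nn : ∀ x ∈ Set.Icc (-1:ℝ) 1, 0 ≤ w₀ x)
    (hf : ContinuousOn f (Set.Icc (-1) 1)) (hg : ContinuousOn g (Set.Icc (-1) 1)) :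
    (∫ x in (-1:ℝ)..1, f x * g x * w₀ x)^2 ≤
      (∫ x in (-1:ℝ)..1, f x^2 * w₀ x) * (∫ x in (-1:ℝ)..1, g x^2 * w₀ x) := by
  set A := ∫ x in (-1:ℝ)..1, f x^2 * w₀ x with hA
  set I := ∫ x in (-1:ℝ)..1, f x * g x * w₀ x with hI
  set Cc := ∫ x in (-1:ℝ)..1, g x^2 * w₀ x with hCc
  have intf2 : IntervalIntegrable (fun x => f x^2 * w₀ x) volume (-1) 1 :=
    st4_int' ((hf.pow 2).mul hw₀)
  have intfg : IntervalIntegrable (fun x => f x * g x * w₀ x) volume (-1) 1 :=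
    st4_int' ((hf.mul hg).mul hw₀)
  have intg2 : IntervalIntegrable (fun x => g x^2 * w₀ x) volume (-1) 1 :=
    st4_int' ((hg.pow 2).mul hw₀)
  have key : ∀ l : ℝ, 0 ≤ A * (l * l) + (2 * I) * l + Cc := by
    intro l
    have h1 : (∫ x in (-1:ℝ)..1, (l * f x + g x)^2 * w₀ x)
        = A * (l * l) + (2 * I) * l + Cc := by
      have e1 : (fun x => (l * f x + g x)^2 * w₀ x)
          = fun x => (l*l) * (f x^2 * w₀ x) + ((2*l) * (f x * g x * w₀ x) + g x^2 * w₀ x) := by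
        funext x; ring
      rw [e1, intervalIntegral.integral_add ((intf2).const_mul _)
            (((intfg).const_mul _).add intg2),
          intervalIntegral.integral_add ((intfg).const_mul _) intg2,
          intervalIntegral.integral_const_mul, intervalIntegral.integral_const_mul]
      ring
    have h0 : 0 ≤ ∫ x in (-1:ℝ)..1, (l * f x + g x)^2 * w₀ x := by
      apply intervalIntegral.integral_nonneg (by norm_num)
      intro u hu
      exact mul_nonneg (sq_nonneg _) (hw₀nn u hu)
    linarith [h1 ▸ h0]
  have hd := discrim_le_zero key
  rw [discrim] at hd
  nlinarith [hd]
lemma st4_P0 {P : ℕ → ℝ → Polynomial ℝ} (hmonic : ∀ n t, (P n t).Monic)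
    (hdeg : ∀ n t, (P n t).natDegree = n) (s : ℝ) : P 0 s = 1 :=
  (hmonic 0 s).natDegree_eq_zero.mp (hdeg 0 s)

lemma st4A {w₀ : ℝ → ℝ} (hw₀ : ContinuousOn w₀ (Set.Icc (-1) 1))
    {P : ℕ → ℝ → Polynomial ℝ} {h : ℕ → ℝ → ℝ}
    (hmonic : ∀ n t, (P n t).Monic) (hdeg : ∀ n t, (P n t).natDegree = n)
    (hJ : ∀ i j s, st4J w₀ (P i s * P j s) s = if i = j then h i s else 0)
    (s : ℝ) (n : ℕ) :
    ∀ (m : ℕ) (q : Polynomial ℝ), q.natDegree ≤ m → (∀ k, n ≤ k → q.coeff k = 0) →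
      st4J w₀ (P n s * q) s = 0 := by
  intro m
  induction m with
  | zero =>
    intro q hq hcoef
    have hqC : q = C (q.coeff 0) := Polynomial.eq_C_of_natDegree_le_zero hq
    rcases Nat.eq_zero_or_pos n with hn | hn
    · subst hn
      have : q = 0 := by rw [hqC, hcoef 0 (le_refl 0), map_zero]
      rw [this, mul_zero, st4J_zero]
    · have heq : P n s * q = C (q.coeff 0) * (P n s * P 0 s) := by
        rw [st4_P0 hmonic hdeg s, mul_one]
        conv_lhs => rw [hqC]
        ring
      rw [heq, st4J_Cmul, hJ]
      rw [if_neg (by omega)]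
      ring
  | succ m ih =>
    intro q hq hcoef
    set c := q.coeff (m+1) with hc
    set q' := q - C c * P (m+1) s with hq'
    have hPcoef : (P (m+1) s).coeff (m+1) = 1 := by
      have := (hmonic (m+1) s).coeff_natDegree
      rwa [hdeg] at this
    have hdq' : q'.natDegree ≤ m := by
      rw [Polynomial.natDegree_le_iff_coeff_eq_zero]
      intro k hk
      rw [hq', Polynomial.coeff_sub, Polynomial.coeff_C_mul]
      rcases eq_or_lt_of_le (Nat.succ_le_of_lt hk) with hk1 | hk1
      · rw [← hk1, hPcoef, hc]; ring
      · have h1 : q.coeff k = 0 :=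
          Polynomial.coeff_eq_zero_of_natDegree_lt (lt_of_le_of_lt hq hk1)
        have h2 : (P (m+1) s).coeff k = 0 :=
          Polynomial.coeff_eq_zero_of_natDegree_lt (by rw [hdeg]; exact hk1)
        rw [h1, h2]; ring
    have hcoef' : ∀ k, n ≤ k → q'.coeff k = 0 := by
      intro k hk
      rw [hq', Polynomial.coeff_sub, Polynomial.coeff_C_mul]
      rcases le_or_gt n (m+1) with hnm | hnm
      · have hc0 : c = 0 := hcoef (m+1) hnm
        rw [hcoef k hk, hc0]; ring
      · have h2 : (P (m+1) s).coeff k = 0 :=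
          Polynomial.coeff_eq_zero_of_natDegree_lt (by rw [hdeg]; omega)
        rw [hcoef k hk, h2]; ring
    have hsplit : P n s * q = P n s * q' + C c * (P n s * P (m+1) s) := by
      rw [hq']; ring
    rw [hsplit, st4J_add hw₀, st4J_Cmul, ih q' hdq' hcoef', hJ]
    by_cases hnm : n = m+1
    · have hc0 : c = 0 := hcoef (m+1) (le_of_eq hnm)
      rw [hc0]; ring
    · rw [if_neg hnm]; ring

lemma st4B {w₀ : ℝ → ℝ} (hw₀ : ContinuousOn w₀ (Set.Icc (-1) 1))
    {P : ℕ → ℝ → Polynomial ℝ} {h : ℕ → ℝ → ℝ}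
    (hmonic : ∀ n t, (P n t).Monic) (hdeg : ∀ n t, (P n t).natDegree = n)
    (hJ : ∀ i j s, st4J w₀ (P i s * P j s) s = if i = j then h i s else 0)
    (s : ℝ) (n : ℕ) (q : Polynomial ℝ) (hq : q.natDegree ≤ n) :
    st4J w₀ (P n s * q) s = q.coeff n * h n s := by
  set q' := q - C (q.coeff n) * P n s with hq'
  have hPcoef : (P n s).coeff n = 1 := by
    have := (hmonic n s).coeff_natDegree
    rwa [hdeg] at this
  have hcoef' : ∀ k, n ≤ k → q'.coeff k = 0 := by
    intro k hk
    rw [hq', Polynomial.coeff_sub, Polynomial.coeff_C_mul]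
    rcases eq_or_lt_of_le hk with hk1 | hk1
    · rw [← hk1, hPcoef]; ring
    · have h1 : q.coeff k = 0 :=
        Polynomial.coeff_eq_zero_of_natDegree_lt (lt_of_le_of_lt hq hk1)
      have h2 : (P n s).coeff k = 0 :=
        Polynomial.coeff_eq_zero_of_natDegree_lt (by rw [hdeg]; exact hk1)
      rw [h1, h2]; ring
  have hdq' : q'.natDegree ≤ n := by
    rw [hq']
    apply le_trans (Polynomial.natDegree_sub_le _ _)
    simp only [max_le_iff]
    exact ⟨hq, le_trans (Polynomial.natDegree_C_mul_le _ _) (le_of_eq (hdeg n s))⟩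
  have hA := st4A hw₀ hmonic hdeg hJ s n n q' hdq' hcoef'
  have hsplit : P n s * q = P n s * q' + C (q.coeff n) * (P n s * P n s) := by
    rw [hq']; ring
  rw [hsplit, st4J_add hw₀, st4J_Cmul, hA, hJ, if_pos rfl]
  ring

lemma st4_absle {f g : ℝ → ℝ} (hf : IntervalIntegrable f volume (-1) 1)
    (hg : IntervalIntegrable g volume (-1) 1)
    (hle : ∀ x ∈ Set.Icc (-1:ℝ) 1, |f x| ≤ g x) :
    |∫ x in (-1:ℝ)..1, f x| ≤ ∫ x in (-1:ℝ)..1, g x := by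
  rw [abs_le]
  constructor
  · have h1 : (∫ x in (-1:ℝ)..1, (-(g x))) ≤ ∫ x in (-1:ℝ)..1, f x := by
      apply intervalIntegral.integral_mono_on (by norm_num) hg.neg hf
      intro x hx
      have := (abs_le.mp (hle x hx)).1
      simpa using this
    rwa [intervalIntegral.integral_neg] at h1
  · apply intervalIntegral.integral_mono_on (by norm_num) hf hg
    intro x hx
    exact le_trans (le_abs_self _) (hle x hx)
lemma st4J_sub {w₀ : ℝ → ℝ} (hw₀ : ContinuousOn w₀ (Set.Icc (-1) 1)) (p q : Polynomial ℝ) (s : ℝ) :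
    st4J w₀ (p - q) s = st4J w₀ p s - st4J w₀ q s := by
  have e : p - q = p + C (-1) * q := by ring_nf; rw [map_neg, map_one]; ring
  rw [e, st4J_add hw₀, st4J_Cmul]; ring

lemma st4_diff {w₀ : ℝ → ℝ} (hw₀ : ContinuousOn w₀ (Set.Icc (-1) 1)) (q : Polynomial ℝ) (t s : ℝ) :
    st4J w₀ q t - st4J w₀ q s
      = ∫ x in (-1:ℝ)..1, q.eval x * w₀ x * (Real.exp (-t*x) - Real.exp (-s*x)) := by
  unfold st4J
  rw [← intervalIntegral.integral_sub (st4_intJ hw₀ q t) (st4_intJ hw₀ q s)]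
  apply intervalIntegral.integral_congr
  intro x _; ring

lemma st4_quad {E : ℝ → ℝ} {t K : ℝ} (hE0 : E t = 0)
    (hb : ∀ s, |s - t| ≤ 1 → |E s| ≤ K * (s-t)^2) : HasDerivAt E 0 t := by
  have hK1 : (0:ℝ) < K + 1 := by
    have h0 := hb (t+1) (by simp)
    simp only [add_sub_cancel_left] at h0
    nlinarith [abs_nonneg (E (t+1)), h0]
  rw [hasDerivAt_iff_isLittleO, Asymptotics.isLittleO_iff]
  intro c hc
  have hball : Metric.closedBall t (min 1 (c / (K+1))) ∈ nhds t :=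
    Metric.closedBall_mem_nhds t (lt_min one_pos (by positivity))
  filter_upwards [hball] with s hs
  rw [Metric.mem_closedBall, Real.dist_eq] at hs
  have h1 : |s - t| ≤ 1 := le_trans hs (min_le_left _ _)
  have h2 : |s - t| ≤ c / (K+1) := le_trans hs (min_le_right _ _)
  have hE := hb s h1
  simp only [hE0, sub_zero, smul_zero]
  rw [Real.norm_eq_abs, Real.norm_eq_abs]
  calc |E s| ≤ K * (s-t)^2 := hE
    _ ≤ (K+1) * (|s-t| * |s-t|) := by
        rw [abs_mul_abs_self]; nlinarith [sq_nonneg (s-t)]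
    _ ≤ (K+1) * ((c/(K+1)) * |s-t|) := by
        apply mul_le_mul_of_nonneg_left _ hK1.le
        exact mul_le_mul_of_nonneg_right h2 (abs_nonneg _)
    _ = c * |s-t| := by field_simp
/-- `(d/dt) p₁(n,t) = β_n(t)` for `n ≥ 1`, and consequently the second Toda
equation `α_n'(t) = β_n(t) - β_{n+1}(t)`, where `p₁(n,t)` is the coefficient of `z^{n-1}`
in the monic orthogonal polynomial `P_n`. -/
theorem second_toda (w₀ : ℝ → ℝ) (hw₀ : ContinuousOn w₀ (Set.Icc (-1) 1))
    (hw₀pos : ∀ x ∈ Set.Icc (-1:ℝ) 1, 0 < w₀ x)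
    (P : ℕ → ℝ → Polynomial ℝ)
    (hmonic : ∀ n t, (P n t).Monic) (hdeg : ∀ n t, (P n t).natDegree = n)
    (h : ℕ → ℝ → ℝ)
    (horth : ∀ i j t, (∫ x in (-1:ℝ)..1,
        (P i t).eval x * (P j t).eval x * w₀ x * Real.exp (-t * x)) =
      if i = j then h i t else 0)
    (hpos : ∀ n t, 0 < h n t)
    (a b : ℕ → ℝ → ℝ)
    (hrec : ∀ (n : ℕ) (t : ℝ), 1 ≤ n →
      Polynomial.X * P n t =
        P (n + 1) t + Polynomial.C (a n t) * P n t + Polynomial.C (b n t) * P (n - 1) t)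
    (hb : ∀ (n : ℕ) (t : ℝ), 1 ≤ n → b n t = h n t / h (n - 1) t)
    (p₁ : ℕ → ℝ → ℝ)
    (hp₁ : ∀ n t, p₁ n t = (P n t).coeff (n - 1))
    (ha : ∀ n t, a n t = p₁ n t - p₁ (n + 1) t) :
    ∀ (n : ℕ) (t : ℝ), 1 ≤ n →
      HasDerivAt (fun s => p₁ n s) (b n t) t ∧
      HasDerivAt (fun s => a n s) (b n t - b (n + 1) t) t := by
  have hw₀nn : ∀ x ∈ Set.Icc (-1:ℝ) 1, 0 ≤ w₀ x := fun x hx => (hw₀pos x hx).le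
  have hJ : ∀ i j s, st4J w₀ (P i s * P j s) s = if i = j then h i s else 0 := by
    intro i j s
    rw [← horth i j s]
    unfold st4J
    apply intervalIntegral.integral_congr
    intro x _
    simp [eval_mul]
  have key : ∀ (n : ℕ), 1 ≤ n → ∀ (t : ℝ), HasDerivAt (fun s => p₁ n s) (b n t) t := by
    intro n hn t
    -- leading coefficient facts
    have hPlead : ∀ (m : ℕ) (s : ℝ), (P m s).coeff m = 1 := by
      intro m s
      have := (hmonic m s).coeff_natDegree
      rwa [hdeg] at this
    have hPhigh : ∀ (m : ℕ) (s : ℝ) (k : ℕ), m < k → (P m s).coeff k = 0 := by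
      intro m s k hk
      exact Polynomial.coeff_eq_zero_of_natDegree_lt (by rw [hdeg]; exact hk)
    -- orthogonality at each time s : st4J (P n s * (P (n-1) t)) s = 0
    have hF1 : ∀ s, st4J w₀ (P n s * (P (n-1) t)) s = 0 := by
      intro s
      apply st4A hw₀ hmonic hdeg hJ s n (n-1) _ (le_of_eq (hdeg _ _))
      intro k hk
      exact hPhigh (n-1) t k (by omega)
    -- coefficient facts about D s = P n s - P n t
    have hDcoef : ∀ s k, n ≤ k → (P n s - P n t).coeff k = 0 := by
      intro s k hk
      rw [Polynomial.coeff_sub]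
      rcases eq_or_lt_of_le hk with hk1 | hk1
      · rw [← hk1, hPlead, hPlead]; ring
      · rw [hPhigh n s k hk1, hPhigh n t k hk1]; ring
    have hDdeg : ∀ s, (P n s - P n t).natDegree ≤ n - 1 := by
      intro s
      rw [Polynomial.natDegree_le_iff_coeff_eq_zero]
      intro k hk
      exact hDcoef s k (by omega)
    -- the ★ identity
    have star : ∀ s, st4J w₀ (P n s * (P (n-1) t)) t = (p₁ n s - p₁ n t) * h (n-1) t := by
      intro s
      have hsplit : P n s * (P (n-1) t)
          = P (n-1) t * (P n s - P n t) + P (n-1) t * P n t := by ring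
      rw [hsplit, st4J_add hw₀, hJ (n-1) n t, if_neg (by omega),
        st4B hw₀ hmonic hdeg hJ t (n-1) _ (hDdeg s), Polynomial.coeff_sub,
        hp₁ n s, hp₁ n t]
      ring
    -- uniform L² bound
    set A : ℝ := Real.exp (|t|+1) * (Real.exp (|t|+1) *
        ∫ x in (-1:ℝ)..1, ((P n t).eval x)^2 * w₀ x) with hA
    have hcontP : ∀ (q : Polynomial ℝ), Continuous (fun x : ℝ => q.eval x) := by
      intro q; exact q.continuous_aeval
    have hintsq : ∀ (q : Polynomial ℝ), IntervalIntegrable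
        (fun x => (q.eval x)^2 * w₀ x) volume (-1) 1 := by
      intro q
      exact st4_int' (((hcontP q).continuousOn.pow 2).mul hw₀)
    have hupper : ∀ s, |s - t| ≤ 1 →
        (∫ x in (-1:ℝ)..1, ((P n s).eval x)^2 * w₀ x) ≤ A := by
      intro s hs
      have hsabs : |s| ≤ |t| + 1 := by
        have := abs_sub_abs_le_abs_sub s t; linarith
      have hE1 : (1:ℝ) ≤ Real.exp (|t|+1) := by
        rw [show (1:ℝ) = Real.exp 0 from Real.exp_zero.symm]
        exact Real.exp_le_exp.mpr (by positivity)
      have hbd : ∀ x : ℝ, x ∈ Set.Icc (-1:ℝ) 1 → ∀ u : ℝ, |u| ≤ |t| + 1 →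
          (Real.exp (-u*x) ≤ Real.exp (|t|+1) ∧
           (1:ℝ) ≤ Real.exp (|t|+1) * Real.exp (-u*x)) := by
        intro x hx u hu
        have hx1 : |x| ≤ 1 := abs_le.mpr ⟨hx.1, hx.2⟩
        have hux : |u*x| ≤ |t|+1 := by
          rw [abs_mul]
          calc |u| * |x| ≤ (|t|+1) * 1 :=
              mul_le_mul hu hx1 (abs_nonneg x) (by positivity)
            _ = |t|+1 := mul_one _
        have h1 := abs_le.mp hux
        constructor
        · exact Real.exp_le_exp.mpr (by nlinarith [h1.1, h1.2])
        · rw [← Real.exp_add]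
          have h2 : (0:ℝ) ≤ |t| + 1 + -u * x := by nlinarith [h1.1, h1.2]
          calc (1:ℝ) = Real.exp 0 := Real.exp_zero.symm
            _ ≤ _ := Real.exp_le_exp.mpr h2
      -- step 1
      have step1 : (∫ x in (-1:ℝ)..1, ((P n s).eval x)^2 * w₀ x)
          ≤ Real.exp (|t|+1) * st4J w₀ (P n s * P n s) s := by
        have e1 : Real.exp (|t|+1) * st4J w₀ (P n s * P n s) s
            = ∫ x in (-1:ℝ)..1, Real.exp (|t|+1) *
                ((P n s * P n s).eval x * w₀ x * Real.exp (-s*x)) := by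
          unfold st4J
          rw [← intervalIntegral.integral_const_mul]
        rw [e1]
        apply intervalIntegral.integral_mono_on (by norm_num) (hintsq (P n s))
          ((st4_intJ hw₀ (P n s * P n s) s).const_mul _)
        intro x hx
        have h1e := (hbd x hx s hsabs).2
        have hyw : 0 ≤ ((P n s).eval x)^2 * w₀ x :=
          mul_nonneg (sq_nonneg _) (hw₀nn x hx)
        calc ((P n s).eval x)^2 * w₀ x = (((P n s).eval x)^2 * w₀ x) * 1 := (mul_one _).symm
          _ ≤ (((P n s).eval x)^2 * w₀ x) * (Real.exp (|t|+1) * Real.exp (-s*x)) :=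
              mul_le_mul_of_nonneg_left h1e hyw
          _ = Real.exp (|t|+1) * ((P n s * P n s).eval x * w₀ x * Real.exp (-s*x)) := by
              rw [eval_mul]; ring
      -- step 3 : minimality
      have step3 : h n s ≤ st4J w₀ (P n t * P n t) s := by
        have hcoefr : ∀ k, n ≤ k → (P n t - P n s).coeff k = 0 := by
          intro k hk
          have := hDcoef s k hk
          rw [Polynomial.coeff_sub] at this ⊢
          linarith
        have hdegr : (P n t - P n s).natDegree ≤ n - 1 := by
          rw [Polynomial.natDegree_le_iff_coeff_eq_zero]
          intro k hk
          exact hcoefr k (by omega)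
        have hr0 : st4J w₀ (P n s * (P n t - P n s)) s = 0 :=
          st4A hw₀ hmonic hdeg hJ s n (n-1) _ hdegr hcoefr
        have hr0' : st4J w₀ ((P n t - P n s) * P n s) s = 0 := by
          rw [mul_comm]; exact hr0
        have hsq : 0 ≤ st4J w₀ ((P n t - P n s) * (P n t - P n s)) s := by
          apply intervalIntegral.integral_nonneg (by norm_num)
          intro u hu
          rw [eval_mul]
          exact mul_nonneg (mul_nonneg (mul_self_nonneg _) (hw₀nn u hu)) (Real.exp_pos _).le
        have hsplit : P n t * P n t = P n s * P n s +
            (P n s * (P n t - P n s) + ((P n t - P n s) * P n s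
              + (P n t - P n s) * (P n t - P n s))) := by ring
        have heq : st4J w₀ (P n t * P n t) s
            = h n s + (0 + (0 + st4J w₀ ((P n t - P n s) * (P n t - P n s)) s)) := by
          rw [hsplit, st4J_add hw₀, st4J_add hw₀, st4J_add hw₀, hJ n n s, if_pos rfl,
            hr0, hr0']
        rw [heq]
        linarith
      -- step 4
      have step4 : st4J w₀ (P n t * P n t) s
          ≤ Real.exp (|t|+1) * ∫ x in (-1:ℝ)..1, ((P n t).eval x)^2 * w₀ x := by
        have e1 : Real.exp (|t|+1) * (∫ x in (-1:ℝ)..1, ((P n t).eval x)^2 * w₀ x)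
            = ∫ x in (-1:ℝ)..1, Real.exp (|t|+1) * (((P n t).eval x)^2 * w₀ x) := by
          rw [← intervalIntegral.integral_const_mul]
        rw [e1]
        apply intervalIntegral.integral_mono_on (by norm_num)
          (st4_intJ hw₀ (P n t * P n t) s) ((hintsq (P n t)).const_mul _)
        intro x hx
        have hec := (hbd x hx s hsabs).1
        have hyw : 0 ≤ ((P n t).eval x)^2 * w₀ x :=
          mul_nonneg (sq_nonneg _) (hw₀nn x hx)
        calc (P n t * P n t).eval x * w₀ x * Real.exp (-s*x)
            = (((P n t).eval x)^2 * w₀ x) * Real.exp (-s*x) := by rw [eval_mul]; ring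
          _ ≤ (((P n t).eval x)^2 * w₀ x) * Real.exp (|t|+1) :=
              mul_le_mul_of_nonneg_left hec hyw
          _ = Real.exp (|t|+1) * (((P n t).eval x)^2 * w₀ x) := by ring
      have hJh : st4J w₀ (P n s * P n s) s = h n s := by rw [hJ n n s, if_pos rfl]
      have hE1nn : (0:ℝ) ≤ Real.exp (|t|+1) := (Real.exp_pos _).le
      calc (∫ x in (-1:ℝ)..1, ((P n s).eval x)^2 * w₀ x)
          ≤ Real.exp (|t|+1) * st4J w₀ (P n s * P n s) s := step1
        _ = Real.exp (|t|+1) * h n s := by rw [hJh]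
        _ ≤ Real.exp (|t|+1) * st4J w₀ (P n t * P n t) s :=
            mul_le_mul_of_nonneg_left step3 hE1nn
        _ ≤ Real.exp (|t|+1) * (Real.exp (|t|+1) *
              ∫ x in (-1:ℝ)..1, ((P n t).eval x)^2 * w₀ x) :=
            mul_le_mul_of_nonneg_left step4 hE1nn
        _ = A := by rw [hA]
    -- Cauchy-Schwarz master bound
    have hintabs : ∀ (p q : Polynomial ℝ), IntervalIntegrable
        (fun x => |p.eval x| * |q.eval x| * w₀ x) volume (-1) 1 := by
      intro p q
      exact st4_int' ((((hcontP p).abs.continuousOn.mul (hcontP q).abs.continuousOn)).mul hw₀)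
    have genbound : ∀ (g : Polynomial ℝ), ∃ K, 0 ≤ K ∧ ∀ s, |s - t| ≤ 1 →
        (∫ x in (-1:ℝ)..1, |(P n s).eval x| * |g.eval x| * w₀ x) ≤ K := by
      intro g
      refine ⟨Real.sqrt (A * ∫ x in (-1:ℝ)..1, (g.eval x)^2 * w₀ x), Real.sqrt_nonneg _, ?_⟩
      intro s hs
      have hCgnn : 0 ≤ ∫ x in (-1:ℝ)..1, (g.eval x)^2 * w₀ x := by
        apply intervalIntegral.integral_nonneg (by norm_num)
        intro u hu; exact mul_nonneg (sq_nonneg _) (hw₀nn u hu)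
      have hCS := st4_CS (f := fun x => |(P n s).eval x|) (g := fun x => |g.eval x|)
        hw₀ hw₀nn ((hcontP (P n s)).abs.continuousOn) ((hcontP g).abs.continuousOn)
      have e1 : (∫ x in (-1:ℝ)..1, |(P n s).eval x|^2 * w₀ x)
          = ∫ x in (-1:ℝ)..1, ((P n s).eval x)^2 * w₀ x := by
        apply intervalIntegral.integral_congr; intro x _; simp only [sq_abs]
      have e2 : (∫ x in (-1:ℝ)..1, |g.eval x|^2 * w₀ x)
          = ∫ x in (-1:ℝ)..1, (g.eval x)^2 * w₀ x := by
        apply intervalIntegral.integral_congr; intro x _; simp only [sq_abs]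
      rw [e1, e2] at hCS
      have hnn : 0 ≤ ∫ x in (-1:ℝ)..1, |(P n s).eval x| * |g.eval x| * w₀ x := by
        apply intervalIntegral.integral_nonneg (by norm_num)
        intro u hu
        exact mul_nonneg (mul_nonneg (abs_nonneg _) (abs_nonneg _)) (hw₀nn u hu)
      have hle : (∫ x in (-1:ℝ)..1, |(P n s).eval x| * |g.eval x| * w₀ x)^2
          ≤ A * ∫ x in (-1:ℝ)..1, (g.eval x)^2 * w₀ x :=
        le_trans hCS (mul_le_mul_of_nonneg_right (hupper s hs) hCgnn)
      calc (∫ x in (-1:ℝ)..1, |(P n s).eval x| * |g.eval x| * w₀ x)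
          = Real.sqrt ((∫ x in (-1:ℝ)..1, |(P n s).eval x| * |g.eval x| * w₀ x)^2) :=
            (Real.sqrt_sq hnn).symm
        _ ≤ _ := Real.sqrt_le_sqrt hle
    -- pointwise exponential difference bound
    have hexpdiff : ∀ x ∈ Set.Icc (-1:ℝ) 1, ∀ s : ℝ, |s - t| ≤ 1 →
        |Real.exp (-t*x) - Real.exp (-s*x)| ≤ 2 * Real.exp |t| * |s - t| := by
      intro x hx s hs
      have hx1 : |x| ≤ 1 := abs_le.mpr ⟨hx.1, hx.2⟩
      have hvabs : |(-((s-t)*x))| ≤ |s-t| := by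
        rw [abs_neg, abs_mul]
        calc |s-t| * |x| ≤ |s-t| * 1 := mul_le_mul_of_nonneg_left hx1 (abs_nonneg _)
          _ = |s-t| := mul_one _
      have hv1 : |(-((s-t)*x))| ≤ 1 := le_trans hvabs hs
      have herr := Real.abs_exp_sub_one_sub_id_le hv1
      have hv2 : (-((s-t)*x))^2 ≤ |s-t| := by
        rw [← sq_abs, sq]
        calc |(-((s-t)*x))| * |(-((s-t)*x))| ≤ 1 * |s-t| :=
            mul_le_mul hv1 hvabs (abs_nonneg _) one_pos.le
          _ = |s-t| := one_mul _
      have hev : |Real.exp (-((s-t)*x)) - 1| ≤ 2 * |s-t| := by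
        have h3 : |Real.exp (-((s-t)*x)) - 1|
            ≤ |Real.exp (-((s-t)*x)) - 1 - (-((s-t)*x))| + |(-((s-t)*x))| := by
          calc |Real.exp (-((s-t)*x)) - 1|
              = |(Real.exp (-((s-t)*x)) - 1 - (-((s-t)*x))) + (-((s-t)*x))| := by ring_nf
            _ ≤ _ := abs_add_le _ _
        calc |Real.exp (-((s-t)*x)) - 1| ≤ (-((s-t)*x))^2 + |(-((s-t)*x))| :=
            le_trans h3 (add_le_add herr le_rfl)
          _ ≤ |s-t| + |s-t| := add_le_add hv2 hvabs
          _ = 2 * |s-t| := by ring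
      have hesplit : Real.exp (-s*x) = Real.exp (-t*x) * Real.exp (-((s-t)*x)) := by
        rw [← Real.exp_add]; congr 1; ring
      have het : Real.exp (-t*x) ≤ Real.exp |t| := by
        apply Real.exp_le_exp.mpr
        calc -t*x ≤ |(-t)*x| := le_abs_self _
          _ = |t| * |x| := by rw [abs_mul, abs_neg]
          _ ≤ |t| * 1 := mul_le_mul_of_nonneg_left hx1 (abs_nonneg _)
          _ = |t| := mul_one _
      calc |Real.exp (-t*x) - Real.exp (-s*x)|
          = Real.exp (-t*x) * |1 - Real.exp (-((s-t)*x))| := by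
            rw [hesplit, show Real.exp (-t*x) - Real.exp (-t*x) * Real.exp (-((s-t)*x))
                = Real.exp (-t*x) * (1 - Real.exp (-((s-t)*x))) from by ring,
              abs_mul, abs_of_pos (Real.exp_pos _)]
        _ ≤ Real.exp |t| * (2 * |s-t|) := by
            apply mul_le_mul het _ (abs_nonneg _) (Real.exp_pos _).le
            rw [abs_sub_comm]; exact hev
        _ = 2 * Real.exp |t| * |s-t| := by ring
    -- small bound : |st4J (P n s * g) t| ≤ K |s-t| for g orthogonal-range
    have smallbound : ∀ (g : Polynomial ℝ), (∀ k, n ≤ k → g.coeff k = 0) →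
        ∃ K, 0 ≤ K ∧ ∀ s, |s - t| ≤ 1 → |st4J w₀ (P n s * g) t| ≤ K * |s - t| := by
      intro g hg
      have hdegg : g.natDegree ≤ n - 1 := by
        rw [Polynomial.natDegree_le_iff_coeff_eq_zero]
        intro k hk; exact hg k (by omega)
      obtain ⟨K, hKnn, hK⟩ := genbound g
      refine ⟨2 * Real.exp |t| * K, by positivity, ?_⟩
      intro s hs
      have h0 : st4J w₀ (P n s * g) s = 0 := st4A hw₀ hmonic hdeg hJ s n (n-1) g hdegg hg
      have hdiff : st4J w₀ (P n s * g) t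
          = ∫ x in (-1:ℝ)..1, (P n s * g).eval x * w₀ x
              * (Real.exp (-t*x) - Real.exp (-s*x)) := by
        rw [← st4_diff hw₀, h0, sub_zero]
      rw [hdiff]
      have int1 : IntervalIntegrable (fun x => (P n s * g).eval x * w₀ x
          * (Real.exp (-t*x) - Real.exp (-s*x))) volume (-1) 1 :=
        st4_int' (((hcontP (P n s * g)).continuousOn.mul hw₀).mul (by fun_prop))
      have habs := st4_absle int1 ((hintabs (P n s) g).const_mul (2 * Real.exp |t| * |s-t|)) ?_
      · calc |∫ x in (-1:ℝ)..1, (P n s * g).eval x * w₀ x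
              * (Real.exp (-t*x) - Real.exp (-s*x))|
            ≤ ∫ x in (-1:ℝ)..1, (2 * Real.exp |t| * |s-t|)
                * (|(P n s).eval x| * |g.eval x| * w₀ x) := habs
          _ = (2 * Real.exp |t| * |s-t|)
                * ∫ x in (-1:ℝ)..1, |(P n s).eval x| * |g.eval x| * w₀ x := by
              rw [intervalIntegral.integral_const_mul]
          _ ≤ (2 * Real.exp |t| * |s-t|) * K :=
              mul_le_mul_of_nonneg_left (hK s hs) (by positivity)
          _ = 2 * Real.exp |t| * K * |s-t| := by ring
      · intro x hx
        have hptw := hexpdiff x hx s hs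
        have hnn1 : 0 ≤ |(P n s).eval x| * |g.eval x| * w₀ x :=
          mul_nonneg (mul_nonneg (abs_nonneg _) (abs_nonneg _)) (hw₀nn x hx)
        calc |(P n s * g).eval x * w₀ x * (Real.exp (-t*x) - Real.exp (-s*x))|
            = (|(P n s).eval x| * |g.eval x| * w₀ x)
                * |Real.exp (-t*x) - Real.exp (-s*x)| := by
              rw [abs_mul, abs_mul, eval_mul, abs_mul, abs_of_nonneg (hw₀nn x hx)]
          _ ≤ (|(P n s).eval x| * |g.eval x| * w₀ x) * (2 * Real.exp |t| * |s-t|) :=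
              mul_le_mul_of_nonneg_left hptw hnn1
          _ = (2 * Real.exp |t| * |s-t|) * (|(P n s).eval x| * |g.eval x| * w₀ x) := by ring
    have Dsmall : ∀ (g : Polynomial ℝ), (∀ k, n ≤ k → g.coeff k = 0) →
        ∃ K, 0 ≤ K ∧ ∀ s, |s - t| ≤ 1 →
          |st4J w₀ ((P n s - P n t) * g) t| ≤ K * |s - t| := by
      intro g hg
      have hdegg : g.natDegree ≤ n - 1 := by
        rw [Polynomial.natDegree_le_iff_coeff_eq_zero]
        intro k hk; exact hg k (by omega)
      obtain ⟨K, hKnn, hK⟩ := smallbound g hg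
      refine ⟨K, hKnn, ?_⟩
      intro s hs
      have hz : st4J w₀ (P n t * g) t = 0 := st4A hw₀ hmonic hdeg hJ t n (n-1) g hdegg hg
      have hsplit : (P n s - P n t) * g = P n s * g - P n t * g := by ring
      rw [hsplit, st4J_sub hw₀, hz, sub_zero]
      exact hK s hs
    -- G and its derivative
    set G : ℝ → ℝ := fun s => st4J w₀ (P n t * (P (n-1) t)) s with hGdef
    have hXg : ∀ k, n < k → (X * P (n-1) t).coeff k = 0 := by
      intro k hk
      obtain ⟨j, rfl⟩ : ∃ j, k = j + 1 := ⟨k - 1, by omega⟩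
      rw [Polynomial.coeff_X_mul]
      exact hPhigh (n-1) t j (by omega)
    have hXgdeg : (X * P (n-1) t).natDegree ≤ n :=
      Polynomial.natDegree_le_iff_coeff_eq_zero.mpr hXg
    have hXgn : (X * P (n-1) t).coeff n = 1 := by
      obtain ⟨j, hj⟩ : ∃ j, n = j + 1 := ⟨n - 1, by omega⟩
      rw [hj, Polynomial.coeff_X_mul]
      have : n - 1 = j := by omega
      rw [← this]
      exact hPlead (n-1) t
    have hG : HasDerivAt G (-(h n t)) t := by
      have hd := st4J_hasDeriv hw₀ (P n t * (P (n-1) t)) t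
      have hv : st4J w₀ (X * (P n t * (P (n-1) t))) t = h n t := by
        have hre : X * (P n t * (P (n-1) t)) = P n t * (X * P (n-1) t) := by ring
        rw [hre, st4B hw₀ hmonic hdeg hJ t n _ hXgdeg, hXgn, one_mul]
      rw [hv] at hd
      exact hd
    have hGt : G t = 0 := by
      show st4J w₀ (P n t * (P (n-1) t)) t = 0
      rw [hJ n (n-1) t, if_neg (by omega)]
    set Hs : ℝ → ℝ := fun s => st4J w₀ (P n s * (P (n-1) t)) t with hHdef
    have hHt : Hs t = 0 := by
      show st4J w₀ (P n t * (P (n-1) t)) t = 0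
      rw [hJ n (n-1) t, if_neg (by omega)]
    -- quadratic bound for E = Hs + G
    have Equad : ∃ K, ∀ s, |s - t| ≤ 1 → |Hs s + G s| ≤ K * (s-t)^2 := by
      obtain ⟨K₁, hK₁nn, hK₁⟩ := genbound (P (n-1) t)
      have hrcoef : ∀ k, n ≤ k → (X * P (n-1) t - P n t).coeff k = 0 := by
        intro k hk
        rw [Polynomial.coeff_sub]
        rcases eq_or_lt_of_le hk with hk1 | hk1
        · rw [← hk1, hXgn, hPlead]; ring
        · rw [hXg k hk1, hPhigh n t k hk1]; ring
      obtain ⟨K₂, hK₂nn, hK₂⟩ := Dsmall _ hrcoef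
      refine ⟨K₂ + 2 * Real.exp |t| * K₁, ?_⟩
      intro s hs
      have he1 : Hs s + G s = st4J w₀ ((P n s - P n t) * P (n-1) t) t
          - st4J w₀ ((P n s - P n t) * P (n-1) t) s := by
        have h1 : (P n s - P n t) * P (n-1) t
            = P n s * P (n-1) t - P n t * P (n-1) t := by ring
        rw [h1, st4J_sub hw₀, st4J_sub hw₀, hF1 s, hJ n (n-1) t, if_neg (by omega)]
        simp only [hHdef, hGdef]
        ring
      set q : Polynomial ℝ := (P n s - P n t) * P (n-1) t with hq
      have intq0 : IntervalIntegrable (fun x => q.eval x * w₀ x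
          * (Real.exp (-t*x) - Real.exp (-s*x))) volume (-1) 1 :=
        st4_int' (((hcontP q).continuousOn.mul hw₀).mul (by fun_prop))
      have intq1 : IntervalIntegrable (fun x => (s-t)
          * ((X*q).eval x * w₀ x * Real.exp (-t*x))) volume (-1) 1 :=
        (st4_intJ hw₀ (X*q) t).const_mul _
      have he3 : st4J w₀ q t - st4J w₀ q s - (s-t) * st4J w₀ (X*q) t
          = ∫ x in (-1:ℝ)..1, q.eval x * w₀ x * Real.exp (-t*x) *
              (-(Real.exp (-((s-t)*x)) - 1 - (-((s-t)*x)))) := by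
        rw [st4_diff hw₀ q t s]
        have e4 : (s-t) * st4J w₀ (X*q) t
            = ∫ x in (-1:ℝ)..1, (s-t) * ((X*q).eval x * w₀ x * Real.exp (-t*x)) := by
          unfold st4J; rw [← intervalIntegral.integral_const_mul]
        rw [e4, ← intervalIntegral.integral_sub intq0 intq1]
        apply intervalIntegral.integral_congr
        intro x _
        have hes : Real.exp (-s*x) = Real.exp (-t*x) * Real.exp (-((s-t)*x)) := by
          rw [← Real.exp_add]; congr 1; ring
        simp only [eval_mul, eval_X, hes]
        ring
      -- remainder bound
      have intq2 : IntervalIntegrable (fun x => q.eval x * w₀ x * Real.exp (-t*x) *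
          (-(Real.exp (-((s-t)*x)) - 1 - (-((s-t)*x))))) volume (-1) 1 :=
        st4_int' ((((hcontP q).continuousOn.mul hw₀).mul (by fun_prop)).mul (by fun_prop))
      have intbnd : IntervalIntegrable (fun x => ((s-t)^2 * Real.exp |t|) *
          (|(P n s).eval x| * |(P (n-1) t).eval x| * w₀ x
            + |(P n t).eval x| * |(P (n-1) t).eval x| * w₀ x)) volume (-1) 1 :=
        ((hintabs (P n s) (P (n-1) t)).add (hintabs (P n t) (P (n-1) t))).const_mul _
      have hrem : |∫ x in (-1:ℝ)..1, q.eval x * w₀ x * Real.exp (-t*x) *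
              (-(Real.exp (-((s-t)*x)) - 1 - (-((s-t)*x))))|
          ≤ (2 * Real.exp |t| * K₁) * (s-t)^2 := by
        have habs := st4_absle intq2 intbnd ?_
        · have e5 : (∫ x in (-1:ℝ)..1, ((s-t)^2 * Real.exp |t|) *
              (|(P n s).eval x| * |(P (n-1) t).eval x| * w₀ x
                + |(P n t).eval x| * |(P (n-1) t).eval x| * w₀ x))
              = ((s-t)^2 * Real.exp |t|) *
                ((∫ x in (-1:ℝ)..1, |(P n s).eval x| * |(P (n-1) t).eval x| * w₀ x)
                  + ∫ x in (-1:ℝ)..1, |(P n t).eval x| * |(P (n-1) t).eval x| * w₀ x) := by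
            rw [intervalIntegral.integral_const_mul,
              intervalIntegral.integral_add (hintabs (P n s) (P (n-1) t))
                (hintabs (P n t) (P (n-1) t))]
          calc |∫ x in (-1:ℝ)..1, q.eval x * w₀ x * Real.exp (-t*x) *
                  (-(Real.exp (-((s-t)*x)) - 1 - (-((s-t)*x))))| ≤ _ := habs
            _ = ((s-t)^2 * Real.exp |t|) *
                ((∫ x in (-1:ℝ)..1, |(P n s).eval x| * |(P (n-1) t).eval x| * w₀ x)
                  + ∫ x in (-1:ℝ)..1, |(P n t).eval x| * |(P (n-1) t).eval x| * w₀ x) := e5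
            _ ≤ ((s-t)^2 * Real.exp |t|) * (K₁ + K₁) := by
                apply mul_le_mul_of_nonneg_left _ (by positivity)
                exact add_le_add (hK₁ s hs) (hK₁ t (by simp))
            _ = (2 * Real.exp |t| * K₁) * (s-t)^2 := by ring
        · intro x hx
          have hx1 : |x| ≤ 1 := abs_le.mpr ⟨hx.1, hx.2⟩
          have hvv : |(-(Real.exp (-((s-t)*x)) - 1 - (-((s-t)*x))))| ≤ (s-t)^2 := by
            rw [abs_neg]
            have hv1 : |(-((s-t)*x))| ≤ 1 := by
              rw [abs_neg, abs_mul]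
              calc |s-t| * |x| ≤ 1 * 1 :=
                  mul_le_mul hs hx1 (abs_nonneg _) one_pos.le
                _ = 1 := mul_one _
            calc |Real.exp (-((s-t)*x)) - 1 - (-((s-t)*x))| ≤ (-((s-t)*x))^2 :=
                Real.abs_exp_sub_one_sub_id_le hv1
              _ = (s-t)^2 * x^2 := by ring
              _ ≤ (s-t)^2 * 1 := by
                  apply mul_le_mul_of_nonneg_left _ (sq_nonneg _)
                  nlinarith [sq_abs x, abs_nonneg x]
              _ = (s-t)^2 := mul_one _
          have het : Real.exp (-t*x) ≤ Real.exp |t| := by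
            apply Real.exp_le_exp.mpr
            calc -t*x ≤ |(-t)*x| := le_abs_self _
              _ = |t| * |x| := by rw [abs_mul, abs_neg]
              _ ≤ |t| * 1 := mul_le_mul_of_nonneg_left hx1 (abs_nonneg _)
              _ = |t| := mul_one _
          have hqe : |q.eval x| ≤ (|(P n s).eval x| + |(P n t).eval x|)
              * |(P (n-1) t).eval x| := by
            rw [hq, eval_mul, abs_mul, eval_sub]
            apply mul_le_mul_of_nonneg_right _ (abs_nonneg _)
            exact abs_sub _ _
          calc |q.eval x * w₀ x * Real.exp (-t*x) *
                  (-(Real.exp (-((s-t)*x)) - 1 - (-((s-t)*x))))|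
              = |q.eval x| * w₀ x * Real.exp (-t*x)
                  * |(-(Real.exp (-((s-t)*x)) - 1 - (-((s-t)*x))))| := by
                rw [abs_mul, abs_mul, abs_mul, abs_of_nonneg (hw₀nn x hx),
                  abs_of_pos (Real.exp_pos _)]
            _ ≤ ((|(P n s).eval x| + |(P n t).eval x|) * |(P (n-1) t).eval x|)
                  * w₀ x * Real.exp |t| * (s-t)^2 := by
                have hnn2 : 0 ≤ (|(P n s).eval x| + |(P n t).eval x|)
                    * |(P (n-1) t).eval x| * w₀ x :=
                  mul_nonneg (by positivity) (hw₀nn x hx)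
                exact mul_le_mul
                  (mul_le_mul (mul_le_mul_of_nonneg_right hqe (hw₀nn x hx)) het
                    (Real.exp_pos _).le hnn2)
                  hvv (abs_nonneg _) (mul_nonneg hnn2 (Real.exp_pos _).le)
            _ = ((s-t)^2 * Real.exp |t|) *
                  (|(P n s).eval x| * |(P (n-1) t).eval x| * w₀ x
                    + |(P n t).eval x| * |(P (n-1) t).eval x| * w₀ x) := by ring
      -- bound on st4J (X*q) t
      have hXq : |st4J w₀ (X*q) t| ≤ K₂ * |s-t| := by
        have hsplit2 : X * q = (P n s - P n t) * P n t
            + (P n s - P n t) * (X * P (n-1) t - P n t) := by rw [hq]; ring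
        have z1 : st4J w₀ ((P n s - P n t) * P n t) t = 0 := by
          have h1 : (P n s - P n t) * P n t = P n t * P n s - P n t * P n t := by ring
          rw [h1, st4J_sub hw₀,
            st4B hw₀ hmonic hdeg hJ t n (P n s) (le_of_eq (hdeg n s)), hPlead,
            hJ n n t, if_pos rfl]
          ring
        rw [hsplit2, st4J_add hw₀, z1, zero_add]
        exact hK₂ s hs
      have hEeq : Hs s + G s = (s-t) * st4J w₀ (X*q) t
          + ∫ x in (-1:ℝ)..1, q.eval x * w₀ x * Real.exp (-t*x) *
              (-(Real.exp (-((s-t)*x)) - 1 - (-((s-t)*x)))) := by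
        rw [he1]; linarith [he3]
      rw [hEeq]
      calc |(s-t) * st4J w₀ (X*q) t + ∫ x in (-1:ℝ)..1, q.eval x * w₀ x
              * Real.exp (-t*x) * (-(Real.exp (-((s-t)*x)) - 1 - (-((s-t)*x))))|
          ≤ |(s-t) * st4J w₀ (X*q) t| + |∫ x in (-1:ℝ)..1, q.eval x * w₀ x
              * Real.exp (-t*x) * (-(Real.exp (-((s-t)*x)) - 1 - (-((s-t)*x))))| :=
            abs_add_le _ _
        _ ≤ |s-t| * (K₂ * |s-t|) + (2 * Real.exp |t| * K₁) * (s-t)^2 := by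
            apply add_le_add _ hrem
            rw [abs_mul]
            exact mul_le_mul_of_nonneg_left hXq (abs_nonneg _)
        _ = (K₂ + 2 * Real.exp |t| * K₁) * (s-t)^2 := by
            rw [show |s-t| * (K₂ * |s-t|) = K₂ * (|s-t| * |s-t|) from by ring,
              abs_mul_abs_self]
            ring
    -- derivative of Hs
    have hHs : HasDerivAt Hs (h n t) t := by
      obtain ⟨K, hK⟩ := Equad
      have hE : HasDerivAt (fun s => Hs s + G s) 0 t :=
        st4_quad (by rw [hHt, hGt, add_zero]) hK
      have h2 := hE.sub hG
      have hfe : ((fun s => Hs s + G s) - G) = Hs := by funext s; simp only [Pi.sub_apply]; ring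
      rw [hfe] at h2
      simpa using h2
    -- conclude
    have hne : h (n-1) t ≠ 0 := (hpos (n-1) t).ne'
    have hfinal : (fun s => p₁ n s) = fun s => p₁ n t + Hs s / h (n-1) t := by
      funext s
      have := star s
      rw [hHdef]
      field_simp
      linarith [this]
    rw [hfinal, hb n t hn]
    exact (hHs.div_const _).const_add _
  intro n t hn
  refine ⟨key n hn t, ?_⟩
  have h2 := (key n hn t).sub (key (n+1) (by omega) t)
  have hfun : (fun s => a n s) = fun s => p₁ n s - p₁ (n+1) s := funext fun s => ha n s
  rw [hfun]
  exact h2
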